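/- arXiv:math/0005099 — 4 statements merged into one kernel-verified Lean document; each statement's English description precedes it below -/
import Mathlib

section
/- An abelian group Γ admits an order P (a subset with P + P ⊆ P, P ∪ (−P) = Γ, and P ∩ (−P) = {0}) if and only if Γ is torsion-free. -/
open Pointwise

/-- The Mathlib (Dec 2024) definition, removed since: an additive monoid is torsion-free
if no nonzero element has finite additive order. -/
def AddMonoid.IsTorsionFree (G : Type*) [AddMonoid G] : Prop :=
  ∀ g : G, g ≠ 0 → ¬IsOfFinAddOrder g

section aux

variable {Γ : Type*} [AddCommGroup Γ]

/-- A "pure cone": contains 0, closed under addition, intersects its negation only in 0,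
and is closed under division by positive naturals. -/
def IsPureCone (S : Set Γ) : Prop :=
  (0 : Γ) ∈ S ∧ (∀ a ∈ S, ∀ b ∈ S, a + b ∈ S) ∧
    (∀ g ∈ S, -g ∈ S → g = 0) ∧ (∀ (g : Γ) (n : ℕ), 0 < n → n • g ∈ S → g ∈ S)

lemma IsPureCone.nsmul_mem {S : Set Γ} (hS : IsPureCone S) {g : Γ} (hg : g ∈ S) (n : ℕ) :
    n • g ∈ S := by
  induction n with
  | zero => simpa using hS.1
  | succ k ih => rw [succ_nsmul]; exact hS.2.1 _ ih _ hg

lemma IsPureCone.total (htf : AddMonoid.IsTorsionFree Γ) {S : Set Γ}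
    (hS : IsPureCone S) (hmax : ∀ T : Set Γ, IsPureCone T → S ⊆ T → T = S) (x : Γ) :
    x ∈ S ∨ -x ∈ S := by
  have hzs : NoZeroSMulDivisors ℕ Γ := ⟨fun {n g} h => by by_contra hc; push_neg at hc; exact htf g hc.2 (isOfFinAddOrder_iff_nsmul_eq_zero.2 ⟨n, Nat.pos_of_ne_zero hc.1, h⟩)⟩
  by_contra hx
  push_neg at hx
  obtain ⟨hx1, hx2⟩ := hx
  -- enlarge S by x and purify
  set T : Set Γ := {g : Γ | ∃ n : ℕ, 0 < n ∧ ∃ p ∈ S, ∃ a : ℕ, n • g = p + a • x} with hT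
  have hST : S ⊆ T := fun g hg => ⟨1, one_pos, g, hg, 0, by simp⟩
  have hTcone : IsPureCone T := by
    refine ⟨hST hS.1, ?_, ?_, ?_⟩
    · rintro g ⟨n, hn, p, hp, a, hgp⟩ h ⟨m, hm, q, hq, b, hhq⟩
      refine ⟨n * m, Nat.mul_pos hn hm, m • p + n • q, hS.2.1 _ (hS.nsmul_mem hp m) _
        (hS.nsmul_mem hq n), m * a + n * b, ?_⟩
      have e1 : (n * m) • (g + h) = m • (n • g) + n • (m • h) := by
        rw [smul_add, mul_smul, smul_comm m n, mul_smul]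
      rw [e1, hgp, hhq, smul_add, smul_add, add_smul, mul_smul, mul_smul]
      abel
    · rintro g ⟨n, hn, p, hp, a, hgp⟩ ⟨m, hm, q, hq, b, hgq⟩
      have key : (m • p + n • q) + (m * a + n * b) • x = 0 := by
        have h0 : m • (n • g) + n • (m • (-g)) = 0 := by
          rw [smul_neg, smul_neg, smul_comm n m]; simp
        rw [hgp, hgq] at h0
        rw [add_smul, mul_smul, mul_smul]
        rw [smul_add, smul_add] at h0
        rw [← h0]; abel
      rcases Nat.eq_zero_or_pos (m * a + n * b) with hk | hk
      · have ha : a = 0 :=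
          (Nat.mul_eq_zero.1 (Nat.add_eq_zero.1 hk).1).resolve_left hm.ne'
        rw [hk, zero_smul, add_zero] at key
        have hmp : m • p ∈ S := hS.nsmul_mem hp m
        have hmpneg : -(m • p) ∈ S := by
          rw [neg_eq_of_add_eq_zero_right key]; exact hS.nsmul_mem hq n
        have hp0 : p = 0 :=
          (smul_eq_zero.1 (hS.2.2.1 _ hmp hmpneg)).resolve_left hm.ne'
        rw [hp0, ha] at hgp
        simp only [zero_smul, add_zero, zero_add] at hgp
        exact (smul_eq_zero.1 hgp).resolve_left hn.ne'
      · exfalso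
        apply hx2
        have hxk : (m * a + n * b) • (-x) = m • p + n • q := by
          rw [smul_neg, neg_eq_of_add_eq_zero_left key]
        exact hS.2.2.2 (-x) _ hk
          (hxk ▸ hS.2.1 _ (hS.nsmul_mem hp m) _ (hS.nsmul_mem hq n))
    · rintro g n hn ⟨m, hm, p, hp, a, hgp⟩
      exact ⟨m * n, Nat.mul_pos hm hn, p, hp, a, by rw [mul_smul]; exact hgp⟩
  have hxT : x ∈ T := ⟨1, one_pos, 0, hS.1, 1, by simp⟩
  rw [hmax T hTcone hST] at hxT
  exact hx1 hxT

end aux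

/-- An abelian group `Γ` admits an order `P` (a subset with `P + P ⊆ P`,
`P ∪ (−P) = Γ`, and `P ∩ (−P) = {0}`) if and only if `Γ` is torsion-free. -/
theorem exists_order_iff_torsionFree (Γ : Type*) [AddCommGroup Γ] :
    (∃ P : Set Γ, P + P ⊆ P ∧ P ∪ (-P) = Set.univ ∧ P ∩ (-P) = {0}) ↔
      AddMonoid.IsTorsionFree Γ := by
  constructor
  · rintro ⟨P, hadd, hunion, hinter⟩ g hg hfin
    have h0P : (0 : Γ) ∈ P ∩ (-P) := by rw [hinter]; rfl
    have hmem : ∀ a ∈ P, ∀ b ∈ P, a + b ∈ P := fun a ha b hb => hadd (Set.add_mem_add ha hb)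
    have hsm : ∀ a ∈ P, ∀ n : ℕ, n • a ∈ P := by
      intro a ha n
      induction n with
      | zero => simpa using h0P.1
      | succ k ih => rw [succ_nsmul]; exact hmem _ ih _ ha
    obtain ⟨n, hn, hng⟩ := isOfFinAddOrder_iff_nsmul_eq_zero.1 hfin
    have key : ∀ a : Γ, a ∈ P → n • a = 0 → a = 0 := by
      intro a ha hna
      have hsum : (n - 1) • a + a = 0 := by
        rw [← succ_nsmul, Nat.sub_add_cancel hn, hna]
      have hnegA : -a ∈ P := by
        rw [neg_eq_of_add_eq_zero_left hsum]
        exact hsm _ ha _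
      have : a ∈ P ∩ (-P) := ⟨ha, by simpa using hnegA⟩
      rw [hinter] at this
      exact this
    have hgu : g ∈ P ∪ (-P) := by rw [hunion]; trivial
    rcases hgu with h | h
    · exact hg (key g h hng)
    · have : -g ∈ P := by simpa using h
      have : -g = 0 := key (-g) this (by rw [neg_nsmul, hng, neg_zero])
      exact hg (by simpa using this)
  · intro htf
    have hzs : NoZeroSMulDivisors ℕ Γ := ⟨fun {n g} h => by by_contra hc; push_neg at hc; exact htf g hc.2 (isOfFinAddOrder_iff_nsmul_eq_zero.2 ⟨n, Nat.pos_of_ne_zero hc.1, h⟩)⟩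
    have h0 : IsPureCone ({0} : Set Γ) := by
      refine ⟨rfl, ?_, ?_, ?_⟩
      · rintro a rfl b rfl; simp
      · rintro g rfl _; rfl
      · intro g n hn hg
        simp only [Set.mem_singleton_iff] at hg ⊢
        exact (smul_eq_zero.1 hg).resolve_left hn.ne'
    obtain ⟨S, -, hSmax⟩ := zorn_subset_nonempty {S : Set Γ | IsPureCone S}
      (fun c hc hchain ⟨s, hs⟩ => by
        refine ⟨⋃₀ c, ⟨?_, ?_, ?_, ?_⟩, fun t ht => Set.subset_sUnion_of_mem ht⟩
        · exact ⟨s, hs, (hc hs).1⟩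
        · rintro a ⟨t, ht, hat⟩ b ⟨u, hu, hbu⟩
          rcases hchain.total ht hu with h | h
          · exact ⟨u, hu, (hc hu).2.1 _ (h hat) _ hbu⟩
          · exact ⟨t, ht, (hc ht).2.1 _ hat _ (h hbu)⟩
        · rintro g ⟨t, ht, hgt⟩ ⟨u, hu, hgu⟩
          rcases hchain.total ht hu with h | h
          · exact (hc hu).2.2.1 _ (h hgt) hgu
          · exact (hc ht).2.2.1 _ hgt (h hgu)
        · rintro g n hn ⟨t, ht, hgt⟩
          exact ⟨t, ht, (hc ht).2.2.2 _ _ hn hgt⟩) _ h0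
    have hScone : IsPureCone S := hSmax.1
    have hmax : ∀ T : Set Γ, IsPureCone T → S ⊆ T → T = S :=
      fun T hT hST => subset_antisymm (hSmax.2 hT hST) hST
    refine ⟨S, ?_, ?_, ?_⟩
    · rintro x hx
      obtain ⟨a, ha, b, hb, rfl⟩ := hx
      exact hScone.2.1 _ ha _ hb
    · apply Set.eq_univ_of_forall
      intro x
      rcases hScone.total htf hmax x with h | h
      · exact Set.mem_union_left _ h
      · exact Set.mem_union_right _ (by simpa using h)
    · apply subset_antisymm
      · rintro g ⟨hg1, hg2⟩
        exact hScone.2.2.1 _ hg1 (by simpa using hg2)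
      · rintro g rfl
        exact ⟨hScone.1, by simpa using hScone.1⟩
end

section
/- The only two Lebesgue-measurable orders on the additive group ℝ are [0, ∞) and (−∞, 0]. -/
open Pointwise

open MeasureTheory

open Set in
lemma exists_inter_pos_aux (E : Set ℝ) (hE : MeasurableSet E) (hpos : 0 < volume E) :
    ∃ x : ℝ, 0 < volume (E ∩ (fun t => x - t) ⁻¹' E) := by
  by_contra h
  push_neg at h
  have h0 : ∀ x : ℝ, volume (E ∩ (fun t => x - t) ⁻¹' E) = 0 :=
    fun x => le_antisymm (h x) zero_le
  set f : ℝ × ℝ → ENNReal := fun p => E.indicator 1 p.2 * E.indicator 1 (p.1 - p.2) with hf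
  have hmeas : Measurable f := by
    apply Measurable.mul
    · exact (measurable_one.indicator hE).comp measurable_snd
    · exact (measurable_one.indicator hE).comp (measurable_fst.sub measurable_snd)
  have key : ∀ x y : ℝ, f (x, y) = (E ∩ (fun t => x - t) ⁻¹' E).indicator 1 y := by
    intro x y
    by_cases h1 : y ∈ E <;> by_cases h2 : x - y ∈ E <;>
      simp [hf, Set.indicator_apply, h1, h2]
  have A1 : ∫⁻ p, f p ∂((volume : Measure ℝ).prod volume) = 0 := by
    rw [MeasureTheory.lintegral_prod f hmeas.aemeasurable]
    have hin : ∀ x : ℝ, ∫⁻ y, f (x, y) = 0 := by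
      intro x
      calc ∫⁻ y, f (x, y) = ∫⁻ y, (E ∩ (fun t => x - t) ⁻¹' E).indicator 1 y := by
            simp_rw [key]
        _ = volume (E ∩ (fun t => x - t) ⁻¹' E) :=
            lintegral_indicator_one (hE.inter (hE.preimage (measurable_const.sub measurable_id)))
        _ = 0 := h0 x
    simp [hin]
  have A2 : ∫⁻ p, f p ∂((volume : Measure ℝ).prod volume) = volume E * volume E := by
    rw [MeasureTheory.lintegral_prod_symm f hmeas.aemeasurable]
    have inner : ∀ y : ℝ, (∫⁻ x, f (x, y)) = E.indicator 1 y * volume E := by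
      intro y
      have e1 : (∫⁻ x, E.indicator 1 (x - y)) = volume E := by
        have hmp : MeasurePreserving (fun x : ℝ => x + (-y)) volume volume :=
          measurePreserving_add_right volume (-y)
        have := hmp.lintegral_comp (measurable_one.indicator hE)
        simp only [← sub_eq_add_neg] at this
        rw [this, lintegral_indicator_one hE]
      calc (∫⁻ x, f (x, y)) = ∫⁻ x, E.indicator 1 y * E.indicator 1 (x - y) := rfl
        _ = E.indicator 1 y * ∫⁻ x, E.indicator 1 (x - y) :=
            lintegral_const_mul _ ((measurable_one.indicator hE).comp
              (measurable_id.sub measurable_const))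
        _ = E.indicator 1 y * volume E := by rw [e1]
    calc (∫⁻ y, ∫⁻ x, f (x, y)) = ∫⁻ y, E.indicator 1 y * volume E := by simp_rw [inner]
      _ = (∫⁻ y, E.indicator 1 y) * volume E :=
          lintegral_mul_const _ (measurable_one.indicator hE)
      _ = volume E * volume E := by rw [lintegral_indicator_one hE]
  rw [A1] at A2
  exact absurd A2.symm (ENNReal.mul_pos hpos.ne' hpos.ne').ne'

lemma add_self_mem_nhds_aux (E : Set ℝ) (hE : MeasurableSet E) (hpos : 0 < volume E) :
    ∃ x₀ : ℝ, E + E ∈ nhds x₀ := by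
  obtain ⟨x₀, hx₀⟩ := exists_inter_pos_aux E hE hpos
  set S := E ∩ (fun t => x₀ - t) ⁻¹' E with hS
  have hSmeas : MeasurableSet S := hE.inter (hE.preimage (measurable_const.sub measurable_id))
  have hsub : S - S ∈ nhds (0 : ℝ) :=
    MeasureTheory.Measure.sub_mem_nhds_zero_of_addHaar_pos volume S hSmeas hx₀
  refine ⟨x₀, Filter.mem_of_superset (x := (fun z => z - x₀) ⁻¹' (S - S)) ?_ ?_⟩
  · exact (Continuous.continuousAt (continuous_id.sub continuous_const)).preimage_mem_nhds
      (by simpa using hsub)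
  · rintro z hz
    obtain ⟨s, hs, s', hs', hss⟩ := Set.mem_sub.1 hz
    have h1 : s ∈ E := hs.1
    have h2 : x₀ - s' ∈ E := hs'.2
    have heq : s + (x₀ - s') = z := by
      have : s - s' = z - x₀ := hss
      linarith
    exact heq ▸ Set.add_mem_add h1 h2

open Set in
lemma order_half (P : Set ℝ)
    (hP1 : P + P ⊆ P) (hP2 : P ∪ (-P) = Set.univ) (hP3 : P ∩ (-P) = {0})
    (hm : NullMeasurableSet P (volume : Measure ℝ))
    (hpos : 0 < volume (P ∩ Set.Ioi 0)) : P = Set.Ici (0 : ℝ) := by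
  have h0 : (0 : ℝ) ∈ P := by
    have : (0 : ℝ) ∈ P ∩ (-P) := by rw [hP3]; rfl
    exact this.1
  set A := P ∩ Set.Ioi 0 with hA
  have hAadd : ∀ x ∈ A, ∀ y ∈ A, x + y ∈ A := by
    rintro x ⟨hx, hx0⟩ y ⟨hy, hy0⟩
    exact ⟨hP1 (Set.add_mem_add hx hy), by simp only [Set.mem_Ioi] at *; linarith⟩
  obtain ⟨E, hEsub, hEmeas, hEae⟩ :=
    (hm.inter measurableSet_Ioi.nullMeasurableSet).exists_measurable_subset_ae_eq
  have hEpos : 0 < volume E := by rwa [measure_congr hEae]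
  obtain ⟨a, hnh⟩ := add_self_mem_nhds_aux E hEmeas hEpos
  obtain ⟨r, hr, hball⟩ := Metric.mem_nhds_iff.1 hnh
  have hballA : Metric.ball a r ⊆ A := by
    intro z hz
    obtain ⟨u, hu, v, hv, huv⟩ := Set.mem_add.1 (hball hz)
    exact huv ▸ hAadd u (hEsub hu) v (hEsub hv)
  have haA : a ∈ A := hballA (Metric.mem_ball_self hr)
  have ha0 : 0 < a := haA.2
  -- iterate the semigroup to get balls around all multiples of a
  have iter : ∀ n : ℕ, ∀ z : ℝ, |z - ((n : ℝ) + 1) * a| < ((n : ℝ) + 1) * r → z ∈ A := by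
    intro n
    induction n with
    | zero =>
      intro z hz
      apply hballA
      rw [Metric.mem_ball, Real.dist_eq]
      simpa using hz
    | succ n ih =>
      intro z hz
      have hm0 : (0 : ℝ) < (n : ℝ) + 1 := by positivity
      set m : ℝ := (n : ℝ) + 1 with hm'
      have hz' : |z - (m + 1) * a| < (m + 1) * r := by
        rw [hm']
        have h1 : ((n + 1 : ℕ) : ℝ) + 1 = (n : ℝ) + 1 + 1 := by push_cast; ring
        rw [h1] at hz
        exact hz
      set e : ℝ := (z - (m + 1) * a) / (m + 1) with he
      have habs : |e| < r := by
        rw [he, abs_div, abs_of_pos (by linarith : (0:ℝ) < m + 1),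
          div_lt_iff₀ (by linarith)]
        linarith [hz']
      have h2 : a + e ∈ A := by
        apply hballA
        rw [Metric.mem_ball, Real.dist_eq]
        simpa using habs
      have hzdecomp : z = (m * a + m * e) + (a + e) := by
        have h3 : z - (m + 1) * a = (m + 1) * e := by
          rw [he]; field_simp
        linarith
      have h1 : m * a + m * e ∈ A := by
        apply ih
        have h4 : |m * a + m * e - ((n : ℝ) + 1) * a| = m * |e| := by
          rw [show m * a + m * e - ((n : ℝ) + 1) * a = m * e by rw [hm']; ring,
            abs_mul, abs_of_pos hm0]
        rw [h4]
        exact mul_lt_mul_of_pos_left habs hm0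
      rw [hzdecomp]
      exact hAadd _ h1 _ h2
  -- P contains a ray [c, ∞)
  set c : ℝ := a * a / r + 2 * a with hc
  have hc0 : 0 < c := by positivity
  have hIci : ∀ z : ℝ, c ≤ z → z ∈ P := by
    intro z hz
    have hz0 : 0 < z := lt_of_lt_of_le hc0 hz
    set k : ℕ := ⌊z / a⌋₊ with hk
    have hk1 : (k : ℝ) ≤ z / a := Nat.floor_le (by positivity)
    have hk2 : z / a < (k : ℝ) + 1 := Nat.lt_floor_add_one _
    have hza : a / r + 2 ≤ z / a := by
      rw [hc] at hz
      rw [le_div_iff₀ ha0]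
      have : (a / r + 2) * a = a * a / r + 2 * a := by field_simp
      linarith [this]
    have hk2' : 2 ≤ k := by
      apply Nat.le_floor
      push_cast
      have : (0:ℝ) ≤ a / r := by positivity
      linarith
    have hkar : a / r + 1 < (k : ℝ) + 1 := lt_of_le_of_lt (by linarith) hk2
    have hkr : a < (k : ℝ) * r := by
      have h5 : a / r < (k : ℝ) := by linarith
      calc a = (a / r) * r := by field_simp
        _ < (k : ℝ) * r := mul_lt_mul_of_pos_right h5 hr
    have hzk1 : (k : ℝ) * a ≤ z := by
      rw [← le_div_iff₀ ha0]; exact hk1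
    have hzk2 : z < ((k : ℝ) + 1) * a := by
      rw [← div_lt_iff₀ ha0]; exact hk2
    have hmem : z ∈ A := by
      have hcast : ((k - 1 : ℕ) : ℝ) + 1 = (k : ℝ) := by
        have : (1:ℕ) ≤ k := by omega
        push_cast [Nat.cast_sub this]
        ring
      apply iter (k - 1)
      rw [hcast, abs_of_nonneg (by linarith)]
      linarith
    exact hmem.1
  -- negative elements of P are impossible
  have hneg : ∀ b : ℝ, 0 < b → -b ∈ P → False := by
    intro b hb hbP
    have hmul : ∀ m : ℕ, -(((m : ℝ) + 1) * b) ∈ P := by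
      intro m
      induction m with
      | zero => simpa using hbP
      | succ m ih =>
        have := hP1 (Set.add_mem_add ih hbP)
        have heq : -(((m : ℝ) + 1) * b) + -b = -((((m + 1 : ℕ) : ℝ) + 1) * b) := by
          push_cast; ring
        rwa [heq] at this
    obtain ⟨mnat, hmnat⟩ := exists_nat_gt (c / b)
    have hmb : c < (mnat : ℝ) * b := by
      rw [div_lt_iff₀ hb] at hmnat
      linarith
    have hs : ((mnat : ℝ) + 2) * b ∈ P := by
      apply hIci
      nlinarith
    have hbmem : b ∈ P := by
      have := hP1 (Set.add_mem_add hs (hmul mnat))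
      have heq : ((mnat : ℝ) + 2) * b + -(((mnat : ℝ) + 1) * b) = b := by ring
      rwa [heq] at this
    have : b ∈ P ∩ (-P) := ⟨hbmem, by simpa [Set.mem_neg] using hbP⟩
    rw [hP3] at this
    simp at this
    linarith
  -- conclude
  ext x
  simp only [Set.mem_Ici]
  constructor
  · intro hx
    by_contra hlt
    push_neg at hlt
    exact hneg (-x) (by linarith) (by simpa using hx)
  · intro hx
    rcases eq_or_lt_of_le hx with h | h
    · rwa [← h]
    · have : x ∈ P ∪ (-P) := by rw [hP2]; trivial
      rcases this with h' | h'
      · exact h'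
      · exact absurd (hneg x h (by simpa [Set.mem_neg] using h')) (fun f => f)

/-- The only two Lebesgue-measurable orders on the additive group `ℝ` are
`[0, ∞)` and `(−∞, 0]`. -/
theorem measurable_order_real (P : Set ℝ)
    (hP1 : P + P ⊆ P) (hP2 : P ∪ (-P) = Set.univ) (hP3 : P ∩ (-P) = {0})
    (hm : NullMeasurableSet P (volume : Measure ℝ)) :
    P = Set.Ici (0 : ℝ) ∨ P = Set.Iic (0 : ℝ) := by
  have hmneg : NullMeasurableSet (-P) (volume : Measure ℝ) := by
    have : (-P : Set ℝ) = Neg.neg ⁻¹' P := by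
      ext x; simp [Set.mem_neg]
    rw [this]
    exact hm.preimage (Measure.measurePreserving_neg volume).quasiMeasurePreserving
  have hcover : Set.Ioi (0:ℝ) ⊆ (P ∩ Set.Ioi 0) ∪ ((-P) ∩ Set.Ioi 0) := by
    intro x hx
    have : x ∈ P ∪ (-P) := by rw [hP2]; trivial
    rcases this with h | h
    · exact Or.inl ⟨h, hx⟩
    · exact Or.inr ⟨h, hx⟩
  have hsum : (⊤ : ENNReal) ≤ volume (P ∩ Set.Ioi 0) + volume ((-P) ∩ Set.Ioi 0) := by
    calc (⊤ : ENNReal) = volume (Set.Ioi (0:ℝ)) := Real.volume_Ioi.symm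
      _ ≤ volume ((P ∩ Set.Ioi 0) ∪ ((-P) ∩ Set.Ioi 0)) := measure_mono hcover
      _ ≤ _ := measure_union_le _ _
  by_cases hApos : 0 < volume (P ∩ Set.Ioi 0)
  · exact Or.inl (order_half P hP1 hP2 hP3 hm hApos)
  · have hA0 : volume (P ∩ Set.Ioi 0) = 0 := by
      simpa [pos_iff_ne_zero] using hApos
    have hBpos : 0 < volume ((-P) ∩ Set.Ioi 0) := by
      rcases eq_or_ne (volume ((-P) ∩ Set.Ioi 0)) 0 with h | h
      · rw [hA0, h] at hsum; simp at hsum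
      · exact pos_iff_ne_zero.mpr h
    right
    have hP1' : (-P) + (-P) ⊆ -P := by
      intro x hx
      obtain ⟨u, hu, v, hv, huv⟩ := Set.mem_add.1 hx
      have h' : -v + -u ∈ P := hP1 (Set.add_mem_add hv hu)
      rw [Set.mem_neg, ← huv]
      simpa [neg_add] using h'
    have hP2' : (-P) ∪ (-(-P)) = Set.univ := by
      rw [neg_neg, Set.union_comm]; exact hP2
    have hP3' : (-P) ∩ (-(-P)) = {0} := by
      rw [neg_neg, Set.inter_comm]; exact hP3
    have hres : -P = Set.Ici (0:ℝ) := order_half (-P) hP1' hP2' hP3' hmneg hBpos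
    have : P = -(Set.Ici (0:ℝ)) := by rw [← hres, neg_neg]
    rw [this]
    ext x
    simp [Set.mem_neg]
end

section
/- The set S = {(x, y) ∈ ℝ² : y² ≤ x} is a T-subset of ℝ², yet there is no nonempty open set W ⊆ ℝ² with W + S ⊆ S. -/
open Pointwise

/-- A subset `S` of a topological abelian group is a `T`-set if for every compact
`K ⊆ S`, each neighborhood of `0` contains a nonempty open set `W` with `W + K ⊆ S`. -/
def IsTSet {Γ : Type*} [AddCommGroup Γ] [TopologicalSpace Γ] (S : Set Γ) : Prop :=
  ∀ K : Set Γ, K ⊆ S → IsCompact K → ∀ U ∈ nhds (0 : Γ),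
    ∃ W : Set Γ, IsOpen W ∧ W.Nonempty ∧ W ⊆ U ∧ W + K ⊆ S

/-- The set `S = {(x, y) ∈ ℝ² : y² ≤ x}` is a `T`-subset of `ℝ²`, yet there is no
nonempty open set `W ⊆ ℝ²` with `W + S ⊆ S`. -/
theorem isTSet_parabola_and_no_open :
    IsTSet {p : ℝ × ℝ | p.2 ^ 2 ≤ p.1} ∧
      ¬ ∃ W : Set (ℝ × ℝ), IsOpen W ∧ W.Nonempty ∧
        W + {p : ℝ × ℝ | p.2 ^ 2 ≤ p.1} ⊆ {p : ℝ × ℝ | p.2 ^ 2 ≤ p.1} := by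
  constructor
  · intro K hKS hK U hU
    obtain ⟨ε, hε, hballU⟩ := Metric.mem_nhds_iff.1 hU
    -- bound on K
    obtain ⟨M₀, hM₀⟩ := hK.isBounded.subset_closedBall 0
    set M : ℝ := max M₀ 0 with hMdef
    have hM : K ⊆ Metric.closedBall 0 M :=
      hM₀.trans (Metric.closedBall_subset_closedBall (le_max_left _ _))
    have hM0 : (0:ℝ) ≤ M := le_max_right _ _
    set r : ℝ := min 1 (min (ε/4) (ε/(8*(M+1)))) with hr
    have hM1 : (0:ℝ) < M + 1 := by linarith
    have hrpos : 0 < r := by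
      apply lt_min one_pos
      apply lt_min (by linarith) (by positivity)
    have hr1 : r ≤ 1 := min_le_left _ _
    have hr4 : r ≤ ε/4 := le_trans (min_le_right _ _) (min_le_left _ _)
    have hr8 : r ≤ ε/(8*(M+1)) := le_trans (min_le_right _ _) (min_le_right _ _)
    refine ⟨Metric.ball (ε/2, 0) r, Metric.isOpen_ball,
      ⟨(ε/2, 0), Metric.mem_ball_self hrpos⟩, ?_, ?_⟩
    · intro w hw
      apply hballU
      have := Metric.mem_ball.1 hw
      have h2 : dist w (0 : ℝ × ℝ) ≤ dist w ((ε/2, 0) : ℝ × ℝ) + dist ((ε/2, 0) : ℝ × ℝ) 0 :=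
        dist_triangle _ _ _
      have h3 : dist ((ε/2, 0) : ℝ × ℝ) 0 = ε/2 := by
        rw [Prod.dist_eq]
        simp [Real.dist_eq]
        rw [abs_of_pos hε, max_eq_left (by linarith : (0:ℝ) ≤ ε/2)]
      rw [Metric.mem_ball]
      calc dist w (0 : ℝ × ℝ) ≤ dist w ((ε/2, 0) : ℝ × ℝ) + ε/2 := by rw [h3] at h2; exact h2
        _ < r + ε/2 := by linarith
        _ ≤ ε := by linarith
    · rintro p hp
      rw [Set.mem_add] at hp
      obtain ⟨w, hw, k, hk, rfl⟩ := hp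
      have hwd := Metric.mem_ball.1 hw
      rw [Prod.dist_eq, max_lt_iff] at hwd
      obtain ⟨hw1, hw2⟩ := hwd
      rw [Real.dist_eq] at hw1 hw2
      have hu : ε/2 - r < w.1 := by
        have := abs_lt.1 hw1; linarith [this.1]
      have hv : |w.2| < r := by simpa using hw2
      have hkS : k.2 ^ 2 ≤ k.1 := hKS hk
      have hky : |k.2| ≤ M := by
        have := hM hk
        rw [Metric.mem_closedBall] at this
        rw [Prod.dist_eq] at this
        have h2 : dist k.2 (0:ℝ) ≤ M := le_trans (le_max_right _ _) this
        simpa [Real.dist_eq] using h2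
      show (w.2 + k.2) ^ 2 ≤ w.1 + k.1
      have key : w.2 ^ 2 + 2 * w.2 * k.2 ≤ ε/4 := by
        have h1 : w.2 ^ 2 ≤ r := by
          have : w.2 ^ 2 ≤ r ^ 2 := by
            rw [← sq_abs]; exact pow_le_pow_left₀ (abs_nonneg _) (le_of_lt hv) 2
          nlinarith
        have h2 : 2 * w.2 * k.2 ≤ 2 * r * M := by
          have : |2 * w.2 * k.2| ≤ 2 * r * M := by
            rw [abs_mul, abs_mul]
            have : |w.2| * |k.2| ≤ r * M :=
              mul_le_mul (le_of_lt hv) hky (abs_nonneg _) (le_of_lt hrpos)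
            calc |(2:ℝ)| * |w.2| * |k.2| = 2 * (|w.2| * |k.2|) := by
                  rw [abs_two]; ring
              _ ≤ 2 * (r * M) := by linarith
              _ = 2 * r * M := by ring
          linarith [abs_le.1 this |>.2, le_abs_self (2 * w.2 * k.2)]
        have h3 : r + 2 * r * M ≤ ε/4 := by
          have : r * (8 * (M+1)) ≤ ε := by
            calc r * (8 * (M+1)) ≤ (ε/(8*(M+1))) * (8*(M+1)) := by
                  apply mul_le_mul_of_nonneg_right hr8; positivity
              _ = ε := by field_simp
          nlinarith
        linarith
      nlinarith [sq_nonneg (w.2 + k.2)]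
  · rintro ⟨W, hWopen, ⟨w₀, hw₀⟩, hWS⟩
    -- W contains a point with nonzero second coordinate
    obtain ⟨δ, hδ, hball⟩ := Metric.isOpen_iff.1 hWopen w₀ hw₀
    -- pick t with |t| < δ and w₀.2 + t ≠ 0
    obtain ⟨t, ht1, ht2, htne⟩ : ∃ t : ℝ, 0 < t ∧ t < δ ∧ w₀.2 + t ≠ 0 := by
      by_cases h : w₀.2 + δ/2 = 0
      · exact ⟨δ/4, by linarith, by linarith, by intro h4; rw [← h] at h4; linarith⟩
      · exact ⟨δ/2, by linarith, by linarith, h⟩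
    set w : ℝ × ℝ := (w₀.1, w₀.2 + t) with hwdef
    have hwW : w ∈ W := by
      apply hball
      rw [Metric.mem_ball, Prod.dist_eq, max_lt_iff]
      refine ⟨by simpa [hwdef] using hδ, ?_⟩
      rw [Real.dist_eq, show w.2 - w₀.2 = t by simp [hwdef], abs_of_pos ht1]
      exact ht2
    set b : ℝ := w₀.2 + t with hbdef
    have hb : ∀ y : ℝ, b ^ 2 + 2 * b * y ≤ w.1 := by
      intro y
      have h : w + (y^2, y) ∈ {p : ℝ × ℝ | p.2 ^ 2 ≤ p.1} :=
        hWS (Set.add_mem_add hwW (by simp [Set.mem_setOf_eq]))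
      have h2 : (w.2 + y) ^ 2 ≤ w.1 + y ^ 2 := by simpa using h
      have hw2 : w.2 = b := rfl
      nlinarith [h2]
    -- contradiction: choose y making LHS exceed w.1
    have := hb ((w.1 + 1 - b ^ 2) / (2 * b))
    have hbne : b ≠ 0 := htne
    have h2b : 2 * b ≠ 0 := by simpa using hbne
    rw [mul_div_assoc'] at this
    rw [mul_div_cancel_left₀ _ h2b] at this
    linarith
end

section
/- Let X be a Banach space and (x_j) a sequence in X such that there exists a constant c with ‖∑_{j=1}^n ε_j x_j‖ ≤ c for all n and all signs ε_j ∈ {0, ±1}. If X contains no subspace isomorphic to c₀ (e.g., X is weakly sequentially complete, as is any space of measures M(Σ)), then the series ∑ x_j converges unconditionally in norm. -/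
open MeasureTheory Filter Metric

namespace BPaux

variable {X : Type*} [NormedAddCommGroup X] [NormedSpace ℝ X]

lemma exists_functional {X : Type*} [NormedAddCommGroup X] [NormedSpace ℝ X]
    (E : Submodule ℝ X) [FiniteDimensional ℝ E] (z : X) (d : ℝ) (hd : 0 < d)
    (hdist : d ≤ Metric.infDist z (E : Set X)) :
    ∃ φ : X →L[ℝ] ℝ, ‖φ‖ ≤ 1 ∧ d ≤ φ z ∧ ∀ v ∈ E, φ v = 0 := by
  haveI : IsClosed (E : Set X) := E.closed_of_finiteDimensional
  set zb : X ⧸ E := Submodule.Quotient.mk z with hzb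
  have hnorm : ‖zb‖ = Metric.infDist z (E : Set X) := QuotientAddGroup.norm_mk z
  have hzb0 : zb ≠ 0 := by
    intro h
    rw [h, norm_zero] at hnorm
    linarith [hdist]
  obtain ⟨g, hg1, hg2⟩ := exists_dual_vector ℝ zb (norm_ne_zero_iff.2 hzb0)
  let mkC : X →L[ℝ] (X ⧸ E) :=
    LinearMap.mkContinuous E.mkQ 1 (fun m => by
      simpa using Submodule.Quotient.norm_mk_le E m)
  refine ⟨g.comp mkC, ?_, ?_, ?_⟩
  · refine ContinuousLinearMap.opNorm_le_bound _ zero_le_one (fun v => ?_)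
    calc ‖g (mkC v)‖ ≤ ‖g‖ * ‖mkC v‖ := g.le_opNorm _
      _ ≤ 1 * ‖v‖ := by
          rw [hg1, one_mul]
          simpa [mkC] using Submodule.Quotient.norm_mk_le E v
  · have : (mkC z) = zb := rfl
    simp only [ContinuousLinearMap.comp_apply, this, hg2]
    rw [hnorm]; exact hdist
  · intro v hv
    have : mkC v = 0 := (Submodule.Quotient.mk_eq_zero E).2 hv
    simp [ContinuousLinearMap.comp_apply, this]

lemma coeff_bound (x : ℕ → X) (c : ℝ) (n : ℕ)
    (hbd : ∀ ε : ℕ → ℝ, (∀ j, ε j = 0 ∨ ε j = 1 ∨ ε j = -1) →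
      ‖∑ j ∈ Finset.range n, ε j • x j‖ ≤ c)
    (a : ℕ → ℝ) (ha : ∀ j, |a j| ≤ 1) :
    ‖∑ j ∈ Finset.range n, a j • x j‖ ≤ c := by
  have key : ∀ m, ∀ a : ℕ → ℝ, (∀ j, |a j| ≤ 1) →
      (∀ j, m ≤ j → a j = 0 ∨ a j = 1 ∨ a j = -1) →
      ‖∑ j ∈ Finset.range n, a j • x j‖ ≤ c := by
    intro m
    induction m with
    | zero => exact fun a ha hs => hbd a (fun j => hs j (Nat.zero_le j))
    | succ m ih =>
      intro a ha hs
      have ham := abs_le.1 (ha m)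
      set l : ℝ := (1 + a m) / 2 with hl
      have hl0 : 0 ≤ l := by simp only [hl]; linarith [ham.1]
      have hl1 : l ≤ 1 := by simp only [hl]; linarith [ham.2]
      set ap := Function.update a m 1 with hap
      set am' := Function.update a m (-1) with ham'
      have hpt : ∀ j, a j = l * ap j + (1 - l) * am' j := by
        intro j
        by_cases h : j = m
        · subst h; simp only [hap, ham', Function.update_self]; ring
        · simp only [hap, ham', Function.update_of_ne h]; ring
      have hsum : ∑ j ∈ Finset.range n, a j • x j
          = l • ∑ j ∈ Finset.range n, ap j • x j
            + (1 - l) • ∑ j ∈ Finset.range n, am' j • x j := by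
        rw [Finset.smul_sum, Finset.smul_sum, ← Finset.sum_add_distrib]
        refine Finset.sum_congr rfl fun j _ => ?_
        rw [hpt j, add_smul, smul_smul, smul_smul]
      have hap1 : ∀ j, |ap j| ≤ 1 := by
        intro j; by_cases h : j = m
        · subst h; simp [hap]
        · simpa [hap, Function.update_of_ne h] using ha j
      have ham1 : ∀ j, |am' j| ≤ 1 := by
        intro j; by_cases h : j = m
        · subst h; simp [ham']
        · simpa [ham', Function.update_of_ne h] using ha j
      have haps : ∀ j, m ≤ j → ap j = 0 ∨ ap j = 1 ∨ ap j = -1 := by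
        intro j hj
        rcases eq_or_lt_of_le hj with h | h
        · right; left; simp [hap, ← h]
        · rw [hap, Function.update_of_ne (by omega : j ≠ m)]; exact hs j h
      have hams : ∀ j, m ≤ j → am' j = 0 ∨ am' j = 1 ∨ am' j = -1 := by
        intro j hj
        rcases eq_or_lt_of_le hj with h | h
        · right; right; simp [ham', ← h]
        · rw [ham', Function.update_of_ne (by omega : j ≠ m)]; exact hs j h
      calc ‖∑ j ∈ Finset.range n, a j • x j‖
          ≤ l * ‖∑ j ∈ Finset.range n, ap j • x j‖
            + (1 - l) * ‖∑ j ∈ Finset.range n, am' j • x j‖ := by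
            rw [hsum]
            refine le_trans (norm_add_le _ _) ?_
            rw [norm_smul, norm_smul, Real.norm_eq_abs, Real.norm_eq_abs,
              abs_of_nonneg hl0, abs_of_nonneg (by linarith : (0:ℝ) ≤ 1 - l)]
        _ ≤ l * c + (1 - l) * c := add_le_add
            (mul_le_mul_of_nonneg_left (ih ap hap1 haps) hl0)
            (mul_le_mul_of_nonneg_left (ih am' ham1 hams) (by linarith))
        _ = c := by ring
  have ha' : ∀ j, |(fun j => if j < n then a j else 0) j| ≤ 1 := by
    intro j; by_cases h : j < n <;> simp [h, ha j]
  have := key n (fun j => if j < n then a j else 0) ha'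
    (by intro j hj; left; simp [Nat.not_lt.2 hj])
  calc ‖∑ j ∈ Finset.range n, a j • x j‖
      = ‖∑ j ∈ Finset.range n, (if j < n then a j else 0) • x j‖ := by
        congr 1
        exact Finset.sum_congr rfl fun j hj => by simp [Finset.mem_range.1 hj]
    _ ≤ c := this

lemma finset_coeff_bound (x : ℕ → X) (c : ℝ)
    (hbd : ∀ (n : ℕ) (ε : ℕ → ℝ), (∀ j, ε j = 0 ∨ ε j = 1 ∨ ε j = -1) →
      ‖∑ j ∈ Finset.range n, ε j • x j‖ ≤ c)
    (s : Finset ℕ) (a : ℕ → ℝ) (M : ℝ) (hM : 0 ≤ M) (ha : ∀ j, |a j| ≤ M) :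
    ‖∑ j ∈ s, a j • x j‖ ≤ M * c := by
  obtain ⟨n, hn⟩ := s.exists_nat_subset_range
  set a' : ℕ → ℝ := fun j => if j ∈ s then a j else 0 with ha'
  have hsum : ∑ j ∈ s, a j • x j = ∑ j ∈ Finset.range n, a' j • x j := by
    have : ∀ j ∈ Finset.range n, a' j • x j = if j ∈ s then a j • x j else 0 := by
      intro j _; by_cases h : j ∈ s <;> simp [ha', h]
    rw [Finset.sum_congr rfl this, Finset.sum_ite_mem,
      Finset.inter_eq_right.2 hn]
  rcases eq_or_lt_of_le hM with h0 | h0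
  · have : ∀ j ∈ s, a j • x j = 0 := by
      intro j _
      have : |a j| ≤ 0 := by rw [h0]; exact ha j
      have : a j = 0 := abs_nonpos_iff.1 this
      simp [this]
    rw [Finset.sum_eq_zero this, ← h0, norm_zero, zero_mul]
  · have ha1 : ∀ j, |a' j / M| ≤ 1 := by
      intro j
      rw [abs_div, abs_of_pos h0, div_le_one h0]
      by_cases h : j ∈ s
      · simpa [ha', h] using ha j
      · simp [ha', h, le_of_lt h0]
    have key := coeff_bound x c n (fun ε hε => hbd n ε hε) (fun j => a' j / M) ha1
    have : ∑ j ∈ Finset.range n, a' j • x j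
        = M • ∑ j ∈ Finset.range n, (a' j / M) • x j := by
      rw [Finset.smul_sum]
      refine Finset.sum_congr rfl fun j _ => ?_
      rw [smul_smul, mul_div_cancel₀ _ (ne_of_gt h0)]
    rw [hsum, this, norm_smul, Real.norm_eq_abs, abs_of_pos h0]
    exact mul_le_mul_of_nonneg_left key (le_of_lt h0)

lemma abs_functional_bound (x : ℕ → X) (c : ℝ)
    (hbd : ∀ (n : ℕ) (ε : ℕ → ℝ), (∀ j, ε j = 0 ∨ ε j = 1 ∨ ε j = -1) →
      ‖∑ j ∈ Finset.range n, ε j • x j‖ ≤ c)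
    (φ : X →L[ℝ] ℝ) (s : Finset ℕ) :
    ∑ j ∈ s, |φ (x j)| ≤ ‖φ‖ * c := by
  set ε : ℕ → ℝ := fun j => if 0 ≤ φ (x j) then 1 else -1 with hε
  have h1 : ∑ j ∈ s, |φ (x j)| = φ (∑ j ∈ s, ε j • x j) := by
    rw [map_sum]
    refine Finset.sum_congr rfl fun j _ => ?_
    by_cases h : 0 ≤ φ (x j)
    · simp [hε, h, abs_of_nonneg h]
    · push_neg at h
      simp [hε, not_le.2 h, abs_of_neg h]
  have h2 : ‖∑ j ∈ s, ε j • x j‖ ≤ 1 * c := by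
    refine finset_coeff_bound x c hbd s ε 1 zero_le_one fun j => ?_
    by_cases h : 0 ≤ φ (x j) <;> simp [hε, h]
  calc ∑ j ∈ s, |φ (x j)| = φ (∑ j ∈ s, ε j • x j) := h1
    _ ≤ ‖φ (∑ j ∈ s, ε j • x j)‖ := le_abs_self _
    _ ≤ ‖φ‖ * ‖∑ j ∈ s, ε j • x j‖ := φ.le_opNorm _
    _ ≤ ‖φ‖ * (1 * c) := mul_le_mul_of_nonneg_left h2 (norm_nonneg _)
    _ = ‖φ‖ * c := by ring

lemma freq_far (y : ℕ → X) (δ C : ℝ) (hδ : 0 < δ) (hy : ∀ n, δ ≤ ‖y n‖)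
    (hyC : ∀ n, ‖y n‖ ≤ C)
    (hweak : ∀ φ : X →L[ℝ] ℝ, Tendsto (fun n => φ (y n)) atTop (nhds 0))
    (E : Submodule ℝ X) [FiniteDimensional ℝ E] :
    ∃ᶠ n in atTop, δ / 3 ≤ Metric.infDist (y n) (E : Set X) := by
  by_contra hcon
  rw [Filter.not_frequently] at hcon
  simp only [not_le] at hcon
  obtain ⟨N, hN⟩ := eventually_atTop.1 hcon
  set z : ℕ → X := fun n => y (n + N) with hz
  have hzdist : ∀ n, infDist (z n) (E : Set X) < δ / 3 := fun n =>
    hN (n + N) (Nat.le_add_left _ _)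
  have hEne : (E : Set X).Nonempty := ⟨0, E.zero_mem⟩
  have hchoice : ∀ n, ∃ e : E, dist (z n) (e : X) < δ / 3 := by
    intro n
    obtain ⟨e, he, hlt⟩ := (Metric.infDist_lt_iff hEne).1 (hzdist n)
    exact ⟨⟨e, he⟩, hlt⟩
  choose e he using hchoice
  have hbound : ∀ n, e n ∈ Metric.closedBall (0 : E) (C + δ / 3) := by
    intro n
    rw [Metric.mem_closedBall, dist_zero_right]
    have h1 : ‖(e n : X)‖ ≤ ‖z n‖ + δ / 3 := by
      have hd := he n
      rw [dist_eq_norm] at hd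
      have h3 : ‖(e n : X)‖ - ‖z n‖ ≤ ‖(e n : X) - z n‖ := norm_sub_norm_le _ _
      rw [norm_sub_rev] at h3
      linarith
    have : ‖e n‖ = ‖(e n : X)‖ := rfl
    rw [this]
    calc ‖(e n : X)‖ ≤ ‖z n‖ + δ / 3 := h1
      _ ≤ C + δ / 3 := by linarith [hyC (n + N)]
  obtain ⟨L, _, ψ, hψmono, hψtend⟩ :=
    (isCompact_closedBall (0 : E) (C + δ / 3)).tendsto_subseq hbound
  have hLtendX : Tendsto (fun n => ((e (ψ n) : X))) atTop (nhds (L : X)) :=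
    (continuous_subtype_val.tendsto L).comp hψtend
  -- ‖L‖ ≤ δ/3
  have hLnorm : ‖(L : X)‖ ≤ δ / 3 := by
    by_cases hL0 : (L : X) = 0
    · rw [hL0, norm_zero]; positivity
    · obtain ⟨φ, hφ1, hφ2⟩ := exists_dual_vector ℝ (L : X) (norm_ne_zero_iff.2 hL0)
      have hzψ : Tendsto (fun n => φ (z (ψ n))) atTop (nhds 0) := by
        have h1 : Tendsto (fun n => ψ n + N) atTop atTop :=
          (tendsto_add_atTop_nat N).comp hψmono.tendsto_atTop
        exact (hweak φ).comp h1
      have heψ : Tendsto (fun n => φ ((e (ψ n) : X))) atTop (nhds (φ L)) :=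
        (φ.continuous.tendsto _).comp hLtendX
      have hdiff : Tendsto (fun n => φ ((e (ψ n) : X)) - φ (z (ψ n))) atTop
          (nhds (φ L)) := by
        simpa using heψ.sub hzψ
      have hle : ∀ n, φ ((e (ψ n) : X)) - φ (z (ψ n)) ≤ δ / 3 := by
        intro n
        have h1 : |φ ((e (ψ n) : X)) - φ (z (ψ n))| ≤ ‖(e (ψ n) : X) - z (ψ n)‖ := by
          rw [← map_sub]
          calc |φ ((e (ψ n) : X) - z (ψ n))| ≤ ‖φ‖ * ‖(e (ψ n) : X) - z (ψ n)‖ :=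
            φ.le_opNorm _
            _ = ‖(e (ψ n) : X) - z (ψ n)‖ := by rw [hφ1, one_mul]
        have h2 : ‖(e (ψ n) : X) - z (ψ n)‖ < δ / 3 := by
          have := he (ψ n); rw [dist_eq_norm] at this
          rwa [← norm_neg, neg_sub]
        linarith [le_abs_self (φ ((e (ψ n) : X)) - φ (z (ψ n)))]
      have := le_of_tendsto hdiff (Eventually.of_forall hle)
      rw [hφ2] at this
      exact_mod_cast this
  -- contradiction: ‖z (ψ n)‖ < δ eventually
  have hev : ∀ᶠ n in atTop, ‖(e (ψ n) : X) - (L : X)‖ < δ / 3 := by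
    have := hLtendX
    rw [Metric.tendsto_atTop] at this
    obtain ⟨N', hN'⟩ := this (δ / 3) (by positivity)
    exact eventually_atTop.2 ⟨N', fun n hn => by
      have := hN' n hn; rwa [dist_eq_norm] at this⟩
  obtain ⟨n, hn⟩ := hev.exists
  have h1 : ‖z (ψ n)‖ < δ := by
    have h2 : ‖z (ψ n) - (e (ψ n) : X)‖ < δ / 3 := by
      have := he (ψ n); rwa [dist_eq_norm] at this
    have h3 : ‖z (ψ n)‖ - ‖(e (ψ n) : X)‖ ≤ ‖z (ψ n) - (e (ψ n) : X)‖ :=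
      norm_sub_norm_le _ _
    have h4 : ‖(e (ψ n) : X)‖ - ‖(L : X)‖ ≤ ‖(e (ψ n) : X) - (L : X)‖ :=
      norm_sub_norm_le _ _
    linarith
  exact absurd (hy (ψ n + N)) (not_le.2 h1)

lemma block_bound (x : ℕ → X) (c : ℝ)
    (hbd : ∀ (n : ℕ) (ε : ℕ → ℝ), (∀ j, ε j = 0 ∨ ε j = 1 ∨ ε j = -1) →
      ‖∑ j ∈ Finset.range n, ε j • x j‖ ≤ c)
    (F : ℕ → Finset ℕ) (hF : ∀ i j, i ≠ j → Disjoint (F i) (F j))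
    (I : Finset ℕ) (t : ℕ → ℝ) (M : ℝ) (hM : 0 ≤ M) (ht : ∀ i, |t i| ≤ M) :
    ‖∑ i ∈ I, t i • ∑ j ∈ F i, x j‖ ≤ M * c := by
  set s : Finset ℕ := I.biUnion F with hs
  set a : ℕ → ℝ := fun j => ∑ i ∈ I, if j ∈ F i then t i else 0 with ha
  have claim1 : ∑ i ∈ I, t i • ∑ j ∈ F i, x j = ∑ j ∈ s, a j • x j := by
    have h1 : ∀ j ∈ s, a j • x j = ∑ i ∈ I, (if j ∈ F i then t i • x j else 0) := by
      intro j _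
      rw [ha]
      simp only [Finset.sum_smul]
      refine Finset.sum_congr rfl fun i _ => ?_
      by_cases h : j ∈ F i <;> simp [h]
    rw [Finset.sum_congr rfl h1, Finset.sum_comm]
    refine Finset.sum_congr rfl fun i hi => ?_
    rw [Finset.sum_ite_mem, Finset.inter_eq_right.2 (Finset.subset_biUnion_of_mem F hi),
      Finset.smul_sum]
  have claim2 : ∀ j, |a j| ≤ M := by
    intro j
    by_cases h : ∃ i ∈ I, j ∈ F i
    · obtain ⟨i₀, hi₀, hji₀⟩ := h
      have : a j = t i₀ := by
        rw [ha]
        refine Finset.sum_eq_single_of_mem i₀ hi₀ (fun i hi hne => ?_) |>.trans (if_pos hji₀)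
        have : j ∉ F i := fun hj => (hF i i₀ hne).forall_ne_finset hj hji₀ rfl
        exact if_neg this
      rw [this]; exact ht i₀
    · push_neg at h
      have : a j = 0 := Finset.sum_eq_zero fun i hi => if_neg (h i hi)
      rw [this, abs_zero]; exact hM
  rw [claim1]
  exact finset_coeff_bound x c hbd s a M hM claim2

end BPaux

open BPaux

set_option maxHeartbeats 2000000 in
/-- (Bessaga–Pełczyński)  Let `X` be a complex Banach space and `(x_j)` a sequence
such that all finite sums `∑ ε_j x_j` with coefficients `ε_j ∈ {0, ±1}` are bounded
in norm by a constant `c` (i.e. the series is weakly unconditionally Cauchy).  If `X`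
contains no subspace isomorphic to `c₀`, then `∑ x_j` converges unconditionally in
norm. -/
theorem unconditional_convergence_of_wuc
    {X : Type*} [NormedAddCommGroup X] [NormedSpace ℂ X] [CompleteSpace X]
    (x : ℕ → X) (c : ℝ)
    (hbd : ∀ (n : ℕ) (ε : ℕ → ℝ), (∀ j, ε j = 0 ∨ ε j = 1 ∨ ε j = -1) →
      ‖∑ j ∈ Finset.range n, ε j • x j‖ ≤ c)
    (hc0 : ¬ ∃ (f : ZeroAtInftyContinuousMap ℕ ℝ →L[ℝ] X) (m : ℝ), 0 < m ∧
      ∀ v, m * ‖v‖ ≤ ‖f v‖) :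
    Summable x := by
  by_contra hns
  have hc' : 0 ≤ c := by
    have := hbd 0 (fun _ => 0) (fun j => Or.inl rfl)
    simpa using this
  -- extract pairwise disjoint blocks with norms ≥ δ
  rw [summable_iff_vanishing_norm] at hns
  push_neg at hns
  obtain ⟨δ, hδpos, hδ⟩ := hns
  choose T hTdisj hTnorm using hδ
  set acc : ℕ → Finset ℕ := fun k => Nat.rec ∅ (fun _ s => s ∪ T s) k with hacc_def
  have hacc : ∀ k, acc (k + 1) = acc k ∪ T (acc k) := fun k => rfl
  set F : ℕ → Finset ℕ := fun k => T (acc k) with hF_def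
  have hFacc : ∀ k, Disjoint (F k) (acc k) := fun k => hTdisj (acc k)
  have haccmono : ∀ i k, i ≤ k → acc i ⊆ acc k := by
    intro i k h
    induction k with
    | zero => rw [Nat.le_zero.1 h]
    | succ k ih =>
      rcases Nat.lt_or_ge i (k + 1) with h' | h'
      · refine (ih (Nat.lt_succ_iff.1 h')).trans ?_
        rw [hacc k]; exact Finset.subset_union_left
      · rw [Nat.le_antisymm h h']
  have hFsub : ∀ i k, i < k → F i ⊆ acc k := by
    intro i k h
    have h1 : F i ⊆ acc (i + 1) := by rw [hacc i]; exact Finset.subset_union_right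
    exact h1.trans (haccmono _ _ h)
  have hFdisj : ∀ i j, i ≠ j → Disjoint (F i) (F j) := by
    intro i j hne
    rcases lt_or_gt_of_ne hne with h | h
    · exact ((hFacc j).mono_right (hFsub i j h)).symm
    · exact (hFacc i).mono_right (hFsub j i h)
  set y : ℕ → X := fun k => ∑ j ∈ F k, x j with hy_def
  have hyδ : ∀ k, δ ≤ ‖y k‖ := fun k => hTnorm (acc k)
  have hyc : ∀ k, ‖y k‖ ≤ c := by
    intro k
    have := finset_coeff_bound x c hbd (F k) (fun _ => 1) 1 zero_le_one
      (fun j => by norm_num)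
    simpa [one_smul] using this
  -- weak unconditional Cauchy consequences for blocks
  have habs : ∀ (φ : X →L[ℝ] ℝ) (I : Finset ℕ), ∑ k ∈ I, |φ (y k)| ≤ ‖φ‖ * c := by
    intro φ I
    have h1 : ∀ k ∈ I, |φ (y k)| ≤ ∑ j ∈ F k, |φ (x j)| := by
      intro k _
      rw [hy_def]
      simp only [map_sum]
      exact Finset.abs_sum_le_sum_abs _ _
    calc ∑ k ∈ I, |φ (y k)| ≤ ∑ k ∈ I, ∑ j ∈ F k, |φ (x j)| :=
          Finset.sum_le_sum h1
      _ = ∑ j ∈ I.biUnion F, |φ (x j)| := by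
          rw [Finset.sum_biUnion]
          intro i hi j hj hij
          exact hFdisj i j hij
      _ ≤ ‖φ‖ * c := abs_functional_bound x c hbd φ _
  have hsumabs : ∀ φ : X →L[ℝ] ℝ, Summable (fun k => |φ (y k)|) := by
    intro φ
    exact summable_of_sum_range_le (fun k => abs_nonneg _)
      (fun n => habs φ (Finset.range n))
  have hweak : ∀ φ : X →L[ℝ] ℝ, Tendsto (fun k => φ (y k)) atTop (nhds 0) := by
    intro φ
    have h0 := (hsumabs φ).tendsto_atTop_zero
    exact squeeze_zero_norm (fun k => le_of_eq (Real.norm_eq_abs _)) h0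
  -- the gliding hump recursion
  set E : List ℕ → Submodule ℝ X := fun l => Submodule.span ℝ (y '' {a | a ∈ l}) with hE_def
  have finE : ∀ l : List ℕ, FiniteDimensional ℝ (E l) := fun l =>
    FiniteDimensional.span_of_finite ℝ ((l.finite_toSet).image y)
  have hφex : ∀ (l : List ℕ) (n : ℕ), ∃ φ : X →L[ℝ] ℝ,
      δ / 3 ≤ Metric.infDist (y n) (E l : Set X) →
      (‖φ‖ ≤ 1 ∧ δ / 3 ≤ φ (y n) ∧ ∀ v ∈ E l, φ v = 0) := by
    intro l n
    by_cases h : δ / 3 ≤ Metric.infDist (y n) (E l : Set X)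
    · haveI := finE l
      obtain ⟨φ, h1, h2, h3⟩ := exists_functional (E l) (y n) (δ / 3) (by positivity) h
      exact ⟨φ, fun _ => ⟨h1, h2, h3⟩⟩
    · exact ⟨0, fun h' => absurd h' h⟩
  choose φfun hφ using hφex
  have hnext : ∀ l : List ℕ, ∃ n, (∀ a ∈ l, a < n) ∧
      (δ / 3 ≤ Metric.infDist (y n) (E l : Set X)) ∧
      (∀ i ∈ Finset.range l.length,
        |φfun (l.take i) (l.getD i 0) (y n)| ≤ δ / 12 * (1 / 2) ^ l.length) := by
    intro l
    haveI := finE l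
    have hfreq := freq_far y δ c hδpos hyδ hyc hweak (E l)
    have hev1 : ∀ᶠ n in atTop, ∀ a ∈ l, a < n := by
      have h := (Filter.eventually_all_finset l.toFinset (l := atTop)
        (p := fun a n => a < n)).2 (fun a _ => eventually_gt_atTop a)
      filter_upwards [h] with n hn a ha
      exact hn a (List.mem_toFinset.2 ha)
    have hev2 : ∀ᶠ n in atTop, ∀ i ∈ Finset.range l.length,
        |φfun (l.take i) (l.getD i 0) (y n)| ≤ δ / 12 * (1 / 2) ^ l.length := by
      rw [Filter.eventually_all_finset]
      intro i _
      have hb : (0:ℝ) < δ / 12 * (1 / 2) ^ l.length := by positivity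
      have h := hweak (φfun (l.take i) (l.getD i 0))
      rw [NormedAddCommGroup.tendsto_nhds_zero] at h
      filter_upwards [h _ hb] with n hn
      exact le_of_lt (by rwa [Real.norm_eq_abs] at hn)
    obtain ⟨n, h1, h2, h3⟩ := (hfreq.and_eventually (hev1.and hev2)).exists
    exact ⟨n, h2, h1, h3⟩
  choose next hlt hdist hsm using hnext
  set L : ℕ → List ℕ := fun j => Nat.rec [] (fun _ l => l ++ [next l]) j with hL_def
  have hLs : ∀ j, L (j + 1) = L j ++ [next (L j)] := fun _ => rfl
  set k : ℕ → ℕ := fun j => next (L j) with hk_def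
  have hLr : ∀ j, L j = (List.range j).map k := by
    intro j
    induction j with
    | zero => rfl
    | succ j ih =>
      rw [hLs j, List.range_succ, List.map_append, ← ih]
      congr 1
  have hlen : ∀ j, (L j).length = j := by intro j; rw [hLr j]; simp
  have hmemL : ∀ i j, i < j → k i ∈ L j := by
    intro i j h
    rw [hLr j]
    exact List.mem_map_of_mem (f := k) (List.mem_range.2 h)
  have htake : ∀ i j, i ≤ j → (L j).take i = L i := by
    intro i j h
    rw [hLr j, hLr i, ← List.map_take, List.take_range, min_eq_left h]
  have hget : ∀ i j, i < j → (L j).getD i 0 = k i := by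
    intro i j h
    rw [hLr j]
    rw [List.getD_eq_getElem _ _ (by simpa using h)]
    simp
  set Φ : ℕ → (X →L[ℝ] ℝ) := fun i => φfun (L i) (k i) with hΦ_def
  have hΦp : ∀ i, ‖Φ i‖ ≤ 1 ∧ δ / 3 ≤ Φ i (y (k i)) ∧ ∀ v ∈ E (L i), Φ i v = 0 :=
    fun i => hφ (L i) (k i) (hdist (L i))
  have hkmono : ∀ i j, i < j → k i < k j := fun i j h => hlt (L j) (k i) (hmemL i j h)
  have hkinj : Function.Injective k := by
    intro i j hij
    by_contra hne
    rcases lt_or_gt_of_ne hne with h | h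
    · exact absurd hij (ne_of_lt (hkmono i j h))
    · exact absurd hij.symm (ne_of_lt (hkmono j i h))
  have hzero : ∀ i j, i < j → Φ j (y (k i)) = 0 := by
    intro i j h
    exact (hΦp j).2.2 _ (Submodule.subset_span ⟨k i, hmemL i j h, rfl⟩)
  have hsmall : ∀ i j, i < j → |Φ i (y (k j))| ≤ δ / 12 * (1 / 2) ^ j := by
    intro i j h
    have := hsm (L j) i (by rw [Finset.mem_range, hlen]; exact h)
    rwa [htake i j (le_of_lt h), hget i j h, hlen] at this
  -- bounds for sums of the subsequence blocks
  have hF'disj : ∀ i j, i ≠ j → Disjoint (F (k i)) (F (k j)) :=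
    fun i j h => hFdisj _ _ (fun hh => h (hkinj hh))
  have hpartial : ∀ (v : ℕ → ℝ) (M : ℝ), 0 ≤ M → (∀ i, |v i| ≤ M) →
      ∀ I : Finset ℕ, ‖∑ i ∈ I, v i • y (k i)‖ ≤ M * c := by
    intro v M hM hv I
    have := block_bound x c hbd (fun i => F (k i)) hF'disj I v M hM hv
    simpa [hy_def] using this
  -- norm bounds for coordinates of c₀ functions
  have hcoe : ∀ (v : ZeroAtInftyContinuousMap ℕ ℝ) (i : ℕ), |v i| ≤ ‖v‖ := by
    intro v i
    have := BoundedContinuousFunction.norm_coe_le_norm v.toBCF i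
    rwa [ZeroAtInftyContinuousMap.norm_toBCF_eq_norm, Real.norm_eq_abs] at this
  have hc0top : ∀ v : ZeroAtInftyContinuousMap ℕ ℝ, Tendsto (fun i => v i) atTop (nhds 0) := by
    intro v
    have := ZeroAtInftyContinuousMapClass.zero_at_infty v
    rwa [cocompact_eq_cofinite, Nat.cofinite_eq_atTop] at this
  -- summability of ∑ v i • y (k i)
  have hsummand : ∀ v : ZeroAtInftyContinuousMap ℕ ℝ, Summable (fun i => v i • y (k i)) := by
    intro v
    rw [summable_iff_vanishing_norm]
    intro ε hε
    have hε' : (0:ℝ) < ε / (2 * (c + 1)) := by positivity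
    have h := hc0top v
    rw [NormedAddCommGroup.tendsto_nhds_zero] at h
    obtain ⟨N, hN⟩ := eventually_atTop.1 (h _ hε')
    refine ⟨Finset.range N, fun t hdisjt => ?_⟩
    set w : ℕ → ℝ := fun i => if N ≤ i then v i else 0 with hw_def
    have hw : ∀ i, |w i| ≤ ε / (2 * (c + 1)) := by
      intro i
      by_cases hi : N ≤ i
      · simp only [hw_def, if_pos hi]
        have := hN i hi
        rw [Real.norm_eq_abs] at this
        exact le_of_lt this
      · simp only [hw_def, if_neg hi, abs_zero]
        positivity
    have heq : ∑ i ∈ t, v i • y (k i) = ∑ i ∈ t, w i • y (k i) := by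
      refine Finset.sum_congr rfl fun i hi => ?_
      have : i ∉ Finset.range N := Finset.disjoint_left.1 hdisjt hi
      rw [Finset.mem_range, not_lt] at this
      simp [hw_def, if_pos this]
    rw [heq]
    calc ‖∑ i ∈ t, w i • y (k i)‖ ≤ ε / (2 * (c + 1)) * c :=
          hpartial w _ (le_of_lt hε') hw t
      _ < ε := by
          rw [div_mul_eq_mul_div, div_lt_iff₀ (by positivity)]
          nlinarith
  -- the continuous linear map
  have hhs : ∀ v : ZeroAtInftyContinuousMap ℕ ℝ,
      HasSum (fun i => v i • y (k i)) (∑' i, v i • y (k i)) := fun v => (hsummand v).hasSum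
  set f0 : ZeroAtInftyContinuousMap ℕ ℝ → X := fun v => ∑' i, v i • y (k i) with hf0_def
  have hf0norm : ∀ v, ‖f0 v‖ ≤ c * ‖v‖ := by
    intro v
    refine le_of_tendsto ((continuous_norm.tendsto _).comp (hhs v)) ?_
    refine Eventually.of_forall fun I => ?_
    have := hpartial (fun i => v i) ‖v‖ (norm_nonneg v) (hcoe v) I
    calc ‖∑ i ∈ I, v i • y (k i)‖ ≤ ‖v‖ * c := this
      _ = c * ‖v‖ := mul_comm _ _
  set flin : ZeroAtInftyContinuousMap ℕ ℝ →ₗ[ℝ] X :=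
    { toFun := f0
      map_add' := by
        intro v w
        refine ((hsummand (v + w)).hasSum.unique ?_)
        have h := (hhs v).add (hhs w)
        convert h using 1
        funext i
        simp [add_smul]
      map_smul' := by
        intro r v
        refine ((hsummand (r • v)).hasSum.unique ?_)
        have h := (hhs v).const_smul r
        convert h using 1
        funext i
        simp [smul_smul]
        rfl } with hflin_def
  set fC : ZeroAtInftyContinuousMap ℕ ℝ →L[ℝ] X :=
    LinearMap.mkContinuous flin c hf0norm with hfC_def
  have hfCapp : ∀ v, fC v = f0 v := fun v => rfl
  -- the lower bound
  have hlow : ∀ v : ZeroAtInftyContinuousMap ℕ ℝ, δ / 6 * ‖v‖ ≤ ‖fC v‖ := by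
    intro v
    by_cases hv : v = 0
    · simp [hv]
    · have hvn : 0 < ‖v‖ := by
        rcases (norm_nonneg v).lt_or_eq with h | h
        · exact h
        · exfalso
          apply hv
          ext i
          have := hcoe v i
          rw [← h] at this
          have := abs_nonpos_iff.1 (this.trans (le_of_eq rfl))
          simpa using this
      -- attained supremum
      set S : Set ℕ := {i | ‖v‖ / 2 ≤ |v i|} with hS_def
      have hSfin : S.Finite := by
        have h := hc0top v
        rw [NormedAddCommGroup.tendsto_nhds_zero] at h
        have h2 := h (‖v‖ / 2) (by positivity)
        rw [← Nat.cofinite_eq_atTop, Filter.eventually_cofinite] at h2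
        refine h2.subset ?_
        intro i hi
        simp only [Set.mem_setOf_eq, not_lt, Real.norm_eq_abs]
        exact hi
      have hSne : S.Nonempty := by
        by_contra h
        rw [Set.not_nonempty_iff_eq_empty] at h
        have hall : ∀ i, |v i| ≤ ‖v‖ / 2 := by
          intro i
          by_contra h'
          push_neg at h'
          have : i ∈ S := le_of_lt h'
          rw [h] at this
          exact this
        have : ‖v‖ ≤ ‖v‖ / 2 := by
          rw [← ZeroAtInftyContinuousMap.norm_toBCF_eq_norm]
          refine BoundedContinuousFunction.norm_le (by positivity) |>.2 fun i => ?_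
          rw [Real.norm_eq_abs]
          exact hall i
        linarith
      obtain ⟨i0, hi0mem, hi0max⟩ :=
        hSfin.toFinset.exists_max_image (fun i => |v i|) (by
          rwa [← Set.Finite.toFinset_nonempty hSfin] at hSne)
      rw [Set.Finite.mem_toFinset] at hi0mem
      have hattain : ∀ i, |v i| ≤ |v i0| := by
        intro i
        by_cases hi : i ∈ S
        · exact hi0max i (Set.Finite.mem_toFinset hSfin |>.2 hi)
        · rw [hS_def, Set.mem_setOf_eq, not_le] at hi
          exact le_trans (le_of_lt hi) hi0mem
      have hi0norm : |v i0| = ‖v‖ := by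
        refine le_antisymm (hcoe v i0) ?_
        rw [← ZeroAtInftyContinuousMap.norm_toBCF_eq_norm]
        refine BoundedContinuousFunction.norm_le (abs_nonneg _) |>.2 fun i => ?_
        rw [Real.norm_eq_abs]
        exact hattain i
      -- the functional estimate
      set φ := Φ i0 with hφ_def2
      have hsum1 : Summable (fun i => φ (v i • y (k i))) :=
        (hsummand v).map (φ : X →L[ℝ] ℝ) φ.continuous
      have happ : φ (fC v) = ∑' i, φ (v i • y (k i)) := by
        rw [hfCapp, hf0_def]
        exact φ.map_tsum (hsummand v)
      have hsplit : φ (fC v) = φ (v i0 • y (k i0)) +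
          ∑' i, (if i = i0 then 0 else φ (v i • y (k i))) := by
        rw [happ]
        exact Summable.tsum_eq_add_tsum_ite hsum1 i0
      have hgeo : HasSum (fun i : ℕ => ‖v‖ * (δ / 12) * (1 / 2) ^ i)
          (‖v‖ * (δ / 12) * 2) := hasSum_geometric_two.mul_left _
      have hRbound : ‖∑' i, (if i = i0 then 0 else φ (v i • y (k i)))‖ ≤
          ‖v‖ * (δ / 12) * 2 := by
        refine tsum_of_norm_bounded hgeo fun i => ?_
        by_cases hi : i = i0
        · rw [if_pos hi, norm_zero]; positivity
        · rw [if_neg hi]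
          have hterm : φ (v i • y (k i)) = v i * φ (y (k i)) := by
            simp
          rw [hterm, Real.norm_eq_abs, abs_mul]
          rcases lt_or_gt_of_ne hi with h | h
          · -- i < i0 : φ (y (k i)) = 0
            rw [hφ_def2, hzero i i0 h, abs_zero, mul_zero]
            positivity
          · -- i > i0
            have h1 := hsmall i0 i h
            rw [← hφ_def2] at h1
            calc |v i| * |φ (y (k i))| ≤ ‖v‖ * (δ / 12 * (1 / 2) ^ i) := by
                  exact mul_le_mul (hcoe v i) h1 (abs_nonneg _) (norm_nonneg _)
              _ = ‖v‖ * (δ / 12) * (1 / 2) ^ i := by ring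
      have hmain : δ / 3 * ‖v‖ ≤ |φ (v i0 • y (k i0))| := by
        have hterm : φ (v i0 • y (k i0)) = v i0 * φ (y (k i0)) := by
          simp
        have h2 : δ / 3 ≤ φ (y (k i0)) := (hΦp i0).2.1
        have h3 : |φ (y (k i0))| = φ (y (k i0)) := abs_of_nonneg (by linarith)
        rw [hterm, abs_mul, hi0norm, h3]
        nlinarith [norm_nonneg v]
      have hfinal : δ / 6 * ‖v‖ ≤ |φ (fC v)| := by
        rw [hsplit]
        have habs2 : |φ (v i0 • y (k i0))| - ‖∑' i, (if i = i0 then 0 else φ (v i • y (k i)))‖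
            ≤ |φ (v i0 • y (k i0)) + ∑' i, (if i = i0 then 0 else φ (v i • y (k i)))| := by
          have := abs_add_le (φ (v i0 • y (k i0)) + ∑' i, (if i = i0 then 0 else φ (v i • y (k i))))
            (-(∑' i, (if i = i0 then 0 else φ (v i • y (k i)))))
          simp only [add_neg_cancel_right, abs_neg] at this
          rw [Real.norm_eq_abs]
          linarith
        have : ‖v‖ * (δ / 12) * 2 = δ / 6 * ‖v‖ := by ring
        linarith [hmain, hRbound]
      have hφ1 : |φ (fC v)| ≤ ‖fC v‖ := by
        calc |φ (fC v)| ≤ ‖φ‖ * ‖fC v‖ := φ.le_opNorm _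
          _ ≤ 1 * ‖fC v‖ := mul_le_mul_of_nonneg_right (hΦp i0).1 (norm_nonneg _)
          _ = ‖fC v‖ := one_mul _
      linarith
  exact hc0 ⟨fC, δ / 6, by positivity, hlow⟩
end
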